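/- For every preference profile R on a finite set A of alternatives, a lottery p is SD-efficient at R if and only if every lottery p' whose support is contained in the support of p is SD-efficient at R. -/

import Mathlib

open Classical

noncomputable section

variable {A : Type*} [Fintype A]

/-- A (weak) preference relation: complete and transitive. -/
def IsPref (r : A → A → Prop) : Prop :=
  (∀ x y, r x y ∨ r y x) ∧ ∀ x y z, r x y → r y z → r x z

/-- A lottery over the alternatives. -/
def Lottery (A : Type*) [Fintype A] :=
  {p : A → ℝ // (∀ x, 0 ≤ p x) ∧ ∑ x, p x = 1}

/-- Probability that lottery `p` yields an alternative at least as good as `x` w.r.t. `r`. -/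
def upperSum (r : A → A → Prop) (p : Lottery A) (x : A) : ℝ :=
  ∑ y, if r y x then p.1 y else 0

/-- `p` (weakly) stochastically dominates `q` w.r.t. the preference relation `r`. -/
def SDGe (r : A → A → Prop) (p q : Lottery A) : Prop :=
  ∀ x, upperSum r q x ≤ upperSum r p x

/-- Strict stochastic dominance. -/
def SDGt (r : A → A → Prop) (p q : Lottery A) : Prop :=
  SDGe r p q ∧ ¬ SDGe r q p

/-- A profile assigning a preference relation to each of `n` agents; validity. -/
def ValidProfile {n : ℕ} (R : Fin n → A → A → Prop) : Prop :=
  ∀ i, IsPref (R i)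

/-- `p` is SD-efficient at profile `R`. -/
def SDEfficientAt {n : ℕ} (R : Fin n → A → A → Prop) (p : Lottery A) : Prop :=
  ¬ ∃ q : Lottery A, (∀ i, SDGe (R i) q p) ∧ ∃ i, SDGt (R i) q p

def Anonymous {n : ℕ} (f : (Fin n → A → A → Prop) → Lottery A) : Prop :=
  ∀ R : Fin n → A → A → Prop, ValidProfile R →
    ∀ σ : Equiv.Perm (Fin n), f (R ∘ σ) = f R

/-- Relabel a preference relation by a permutation of the alternatives. -/
def relabel (π : Equiv.Perm A) (r : A → A → Prop) : A → A → Prop :=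
  fun x y => r (π.symm x) (π.symm y)

def relabelProfile {n : ℕ} (π : Equiv.Perm A) (R : Fin n → A → A → Prop) :
    Fin n → A → A → Prop :=
  fun i => relabel π (R i)

def Neutral {n : ℕ} (f : (Fin n → A → A → Prop) → Lottery A) : Prop :=
  ∀ R : Fin n → A → A → Prop, ValidProfile R →
    ∀ (π : Equiv.Perm A) (x : A), (f (relabelProfile π R)).1 (π x) = (f R).1 x

def Efficient {n : ℕ} (f : (Fin n → A → A → Prop) → Lottery A) : Prop :=
  ∀ R : Fin n → A → A → Prop, ValidProfile R → SDEfficientAt R (f R)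

def Strategyproof {n : ℕ} (f : (Fin n → A → A → Prop) → Lottery A) : Prop :=
  ¬ ∃ (R : Fin n → A → A → Prop) (i : Fin n) (r : A → A → Prop),
      ValidProfile R ∧ IsPref r ∧ SDGt (R i) (f (Function.update R i r)) (f R)


/-- The support of a lottery. -/
def supp {A : Type*} [Fintype A] (p : Lottery A) : Set A := {x | 0 < p.1 x}

/-- A lottery is SD-efficient iff every lottery whose support is contained in its support
is SD-efficient. -/
theorem sd_efficient_iff_support {A : Type*} [Fintype A] {n : ℕ}
    (R : Fin n → A → A → Prop) (hR : ValidProfile R) (p : Lottery A) :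
    SDEfficientAt R p ↔ ∀ p' : Lottery A, supp p' ⊆ supp p → SDEfficientAt R p' := by
  constructor
  · intro hp p' hsub hne
    obtain ⟨q, hq, i, hi⟩ := hne
    -- the support of p' is nonempty
    have hex : ∃ x, 0 < p'.1 x := by
      by_contra h
      push_neg at h
      have hz : ∑ x, p'.1 x = 0 :=
        Finset.sum_eq_zero (fun x _ => le_antisymm (h x) (p'.2.1 x))
      rw [p'.2.2] at hz; linarith
    obtain ⟨x₀, hx₀⟩ := hex
    haveI : Nonempty A := ⟨x₀⟩
    have hle1 : ∀ x, p'.1 x ≤ 1 := by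
      intro x
      have := Finset.single_le_sum (fun y _ => p'.2.1 y) (Finset.mem_univ x)
      rwa [p'.2.2] at this
    set g : A → ℝ := fun x => if 0 < p'.1 x then p.1 x else 1 with hg
    set ε : ℝ := Finset.univ.inf' Finset.univ_nonempty g with hεdef
    have hε : 0 < ε := by
      rw [hεdef, Finset.lt_inf'_iff]
      intro x _
      by_cases h : 0 < p'.1 x
      · simpa [hg, h, supp] using hsub h
      · simp [hg, h]
    have hεle : ∀ x, 0 < p'.1 x → ε ≤ p.1 x := by
      intro x hx
      have h2 : ε ≤ g x := Finset.inf'_le g (Finset.mem_univ x)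
      exact h2.trans_eq (if_pos hx)
    -- the perturbed lottery
    have hnn : ∀ x, 0 ≤ p.1 x + ε * (q.1 x - p'.1 x) := by
      intro x
      by_cases h : 0 < p'.1 x
      · have h1 := hεle x h
        have h2 := hle1 x
        have h3 := mul_nonneg hε.le (q.2.1 x)
        nlinarith [mul_le_mul_of_nonneg_left h2 hε.le]
      · have h0 : p'.1 x = 0 := le_antisymm (not_lt.1 h) (p'.2.1 x)
        have h3 := mul_nonneg hε.le (q.2.1 x)
        have := p.2.1 x
        rw [h0]; linarith
    have hsum : ∑ x, (p.1 x + ε * (q.1 x - p'.1 x)) = 1 := by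
      rw [Finset.sum_add_distrib, ← Finset.mul_sum, Finset.sum_sub_distrib,
        p.2.2, q.2.2, p'.2.2]
      ring
    set r' : Lottery A := ⟨fun x => p.1 x + ε * (q.1 x - p'.1 x), hnn, hsum⟩ with hr'
    have key : ∀ (r : A → A → Prop) (x : A),
        upperSum r r' x = upperSum r p x + ε * (upperSum r q x - upperSum r p' x) := by
      intro r x
      simp only [upperSum, hr']
      have hy : ∀ y, (if r y x then p.1 y + ε * (q.1 y - p'.1 y) else 0)
          = (if r y x then p.1 y else 0)
            + ε * ((if r y x then q.1 y else 0) - (if r y x then p'.1 y else 0)) := by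
        intro y; split_ifs <;> ring
      rw [Finset.sum_congr rfl (fun y _ => hy y), Finset.sum_add_distrib,
        ← Finset.mul_sum, Finset.sum_sub_distrib]
    have hge : ∀ j, SDGe (R j) r' p := by
      intro j x
      rw [key]
      have := hq j x
      nlinarith [mul_nonneg hε.le (sub_nonneg.2 (hq j x))]
    apply hp
    refine ⟨r', hge, i, hge i, ?_⟩
    intro hcon
    obtain ⟨x, hx⟩ := not_forall.1 hi.2
    have hstrict : upperSum (R i) p' x < upperSum (R i) q x := not_le.1 hx
    have := hcon x
    rw [key] at this
    nlinarith [mul_pos hε (sub_pos.2 hstrict)]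
  · intro h
    exact h p (fun x hx => hx)

end
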